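/- Let Γ be a finite group, K and L Γ-simplicial complexes, and f, g : K → L Γ-equivariant simplicial maps which are strongly Γ-homotopic. Then the induced order-preserving maps Ff, Fg : FK → FL between the face posets are strongly Γ-homotopic. -/

import Mathlib

/-- An abstract simplicial complex on the vertex type `V`: a family of finite subsets of `V`
closed under taking subsets. -/
structure Cplx (V : Type*) where
  faces : Set (Set V)
  finite_mem : ∀ σ ∈ faces, Set.Finite σ
  down_closed : ∀ σ ∈ faces, ∀ τ ⊆ σ, τ ∈ faces

/-- The vertex set of a simplicial complex. -/
def Cplx.verts {V : Type*} (K : Cplx V) : Set V := {v | ({v} : Set V) ∈ K.faces}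

/-- `a` is an action of the group `Γ` on the vertex type of `K` by simplicial automorphisms. -/
def IsCplxAction (Γ : Type*) [Group Γ] {V : Type*} (a : Γ → V → V) (K : Cplx V) : Prop :=
  (∀ v, a 1 v = v) ∧ (∀ γ γ' : Γ, ∀ v, a (γ * γ') v = a γ (a γ' v)) ∧
    ∀ γ : Γ, ∀ σ ∈ K.faces, (a γ) '' σ ∈ K.faces

/-- A simplicial multi-map from `K` to `L`: it assigns to each vertex of `K` a nonempty subset
of the vertices of `L`, so that `⋃ v ∈ σ, η v` is a simplex of `L` for every simplex `σ` of
`K`. -/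
def IsMultiMap {V W : Type*} (K : Cplx V) (L : Cplx W) (η : V → Set W) : Prop :=
  (∀ v ∈ K.verts, (η v).Nonempty) ∧ ∀ σ ∈ K.faces, (⋃ v ∈ σ, η v) ∈ L.faces

/-- A Γ-equivariant simplicial multi-map, i.e. an element of `Map_Γ(K, L)`. -/
def IsEquivMultiMap (Γ : Type*) [Group Γ] {V W : Type*} (a : Γ → V → V) (b : Γ → W → W)
    (K : Cplx V) (L : Cplx W) (η : V → Set W) : Prop :=
  IsMultiMap K L η ∧ ∀ γ : Γ, ∀ v ∈ K.verts, η (a γ v) = (b γ) '' (η v)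

/-- Pointwise order on multi-maps out of `K` (on the vertices of `K`). -/
def mmLE {V W : Type*} (K : Cplx V) (η η' : V → Set W) : Prop := ∀ v ∈ K.verts, η v ⊆ η' v

/-- An element of `Def_Γ(K, L)`: a Γ-equivariant simplicial multi-map `K → K` with
`η v = {v}` for every vertex `v` of the subcomplex `L`. -/
def IsDefMultiMap (Γ : Type*) [Group Γ] {V : Type*} (a : Γ → V → V) (K L : Cplx V)
    (η : V → Set V) : Prop :=
  IsEquivMultiMap Γ a a K K η ∧ ∀ v ∈ L.verts, η v = {v}

/-- One step of a zigzag in `Def_Γ(K, L)`: both multi-maps lie in `Def_Γ(K, L)` and they are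
comparable. -/
def cplxDefStep (Γ : Type*) [Group Γ] {V : Type*} (a : Γ → V → V) (K L : Cplx V)
    (η η' : V → Set V) : Prop :=
  IsDefMultiMap Γ a K L η ∧ IsDefMultiMap Γ a K L η' ∧ (mmLE K η η' ∨ mmLE K η' η)

/-- The Γ-simplicial complex `K` strongly Γ-collapses to its Γ-subcomplex `L`: there is a
simplicial map `f` belonging to the identity component of `Def_Γ(K, L)` (joined to the
identity by a finite zigzag of pairwise comparable elements) whose image is contained in
`L`. -/
def CplxCollapses (Γ : Type*) [Group Γ] {V : Type*} (a : Γ → V → V) (K L : Cplx V) : Prop :=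
  ∃ f : V → V, IsDefMultiMap Γ a K L (fun v => {f v}) ∧
    Relation.ReflTransGen (cplxDefStep Γ a K L) (fun v => {v}) (fun v => {f v}) ∧
    ∀ σ ∈ K.faces, f '' σ ∈ L.faces
/-- The face poset of `K`, realized as the set of nonempty simplices of `K` inside the poset
`Set V` (ordered by inclusion). -/
def facePoset {V : Type*} (K : Cplx V) : Set (Set V) := {σ | σ ∈ K.faces ∧ σ.Nonempty}

/-- The barycentric subdivision `Sd(K) = Δ(FK)`: the simplicial complex on the nonempty
simplices of `K` whose simplices are the finite chains of the face poset of `K`. -/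
def sd {V : Type*} (K : Cplx V) : Cplx (Set V) where
  faces := {c | c.Finite ∧ (∀ σ ∈ c, σ ∈ facePoset K) ∧ IsChain (· ⊆ ·) c}
  finite_mem := fun _ h => h.1
  down_closed := fun c hc d hdc =>
    ⟨hc.1.subset hdc, fun σ hσ => hc.2.1 σ (hdc hσ),
      by exact fun x hx y hy hxy => hc.2.2 (hdc hx) (hdc hy) hxy⟩

/-- Two multi-maps are strongly Γ-homotopic: they lie in the same connected component of
`Map_Γ(K, L)`, i.e. they are joined by a finite zigzag of pairwise comparable Γ-equivariant
simplicial multi-maps. -/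
def StronglyGHomotopicMM (Γ : Type*) [Group Γ] {V W : Type*} (a : Γ → V → V) (b : Γ → W → W)
    (K : Cplx V) (L : Cplx W) (η η' : V → Set W) : Prop :=
  Relation.ReflTransGen
    (fun θ θ' => IsEquivMultiMap Γ a b K L θ ∧ IsEquivMultiMap Γ a b K L θ' ∧
      (mmLE K θ θ' ∨ mmLE K θ' θ)) η η'

/-- A Γ-equivariant order-preserving map from the induced subposet `A` of `P` to the induced
subposet `B` of `Q`, i.e. an element of `Poset_Γ(A, B)`. -/
def IsGPosetMapOn (Γ : Type*) [Group Γ] {P Q : Type*} [PartialOrder P] [PartialOrder Q]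
    (aP : Γ → P → P) (aQ : Γ → Q → Q) (A : Set P) (B : Set Q) (f : P → Q) : Prop :=
  Set.MapsTo f A B ∧ (∀ x ∈ A, ∀ y ∈ A, x ≤ y → f x ≤ f y) ∧
    ∀ γ : Γ, ∀ x ∈ A, f (aP γ x) = aQ γ (f x)

/-- Two Γ-poset maps are strongly Γ-homotopic: they lie in the same connected component of
`Poset_Γ(A, B)` (joined by a finite zigzag of pairwise comparable Γ-poset maps). -/
def StronglyGHomotopicPosetOn (Γ : Type*) [Group Γ] {P Q : Type*} [PartialOrder P]
    [PartialOrder Q] (aP : Γ → P → P) (aQ : Γ → Q → Q) (A : Set P) (B : Set Q)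
    (f g : P → Q) : Prop :=
  Relation.ReflTransGen
    (fun h h' => IsGPosetMapOn Γ aP aQ A B h ∧ IsGPosetMapOn Γ aP aQ A B h' ∧
      ((∀ x ∈ A, h x ≤ h' x) ∨ (∀ x ∈ A, h' x ≤ h x))) f g


lemma vert_of_mem_face {V : Type*} {K : Cplx V} {σ : Set V} (hσ : σ ∈ K.faces)
    {v : V} (hv : v ∈ σ) : v ∈ K.verts :=
  K.down_closed σ hσ {v} (Set.singleton_subset_iff.2 hv)

lemma fmap_isGPosetMapOn {Γ V W : Type*} [Group Γ]
    (a : Γ → V → V) (b : Γ → W → W) (K : Cplx V) (L : Cplx W)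
    (ha : IsCplxAction Γ a K) {η : V → Set W}
    (hη : IsEquivMultiMap Γ a b K L η) :
    IsGPosetMapOn Γ (fun γ (σ : Set V) => (a γ) '' σ)
      (fun γ (σ : Set W) => (b γ) '' σ) (facePoset K) (facePoset L)
      (fun σ => ⋃ v ∈ σ, η v) := by
  obtain ⟨⟨hne, hface⟩, heq⟩ := hη
  refine ⟨?_, ?_, ?_⟩
  · rintro σ ⟨hσ, v, hv⟩
    refine ⟨hface σ hσ, ?_⟩
    obtain ⟨w, hw⟩ := hne v (vert_of_mem_face hσ hv)
    exact ⟨w, Set.mem_biUnion hv hw⟩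
  · rintro σ hσ τ hτ hst
    exact Set.biUnion_subset_biUnion_left hst
  · rintro γ σ ⟨hσ, -⟩
    ext w
    simp only [Set.mem_iUnion, Set.mem_image]
    constructor
    · rintro ⟨x, ⟨v, hv, rfl⟩, hw⟩
      rw [heq γ v (vert_of_mem_face hσ hv)] at hw
      obtain ⟨u, hu, rfl⟩ := hw
      exact ⟨u, ⟨v, hv, hu⟩, rfl⟩
    · rintro ⟨u, ⟨v, hv, hu⟩, rfl⟩
      refine ⟨a γ v, ⟨v, hv, rfl⟩, ?_⟩
      rw [heq γ v (vert_of_mem_face hσ hv)]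
      exact ⟨u, hu, rfl⟩

lemma fmap_singleton {V W : Type*} (f : V → W) :
    (fun σ : Set V => ⋃ v ∈ σ, ({f v} : Set W)) = fun σ => f '' σ := by
  funext σ
  ext w
  simp [Set.mem_image, eq_comm]

/-- Let Γ be a finite group, K and L Γ-simplicial complexes, and f, g : K → L
Γ-equivariant simplicial maps which are strongly Γ-homotopic.  Then the induced
order-preserving maps Ff, Fg : FK → FL between the face posets are strongly Γ-homotopic. -/
theorem facePoset_map_strongly_homotopic {Γ V W : Type*} [Group Γ] [Finite Γ]
    (a : Γ → V → V) (b : Γ → W → W) (K : Cplx V) (L : Cplx W)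
    (ha : IsCplxAction Γ a K) (hb : IsCplxAction Γ b L) (f g : V → W)
    (hf : ∀ σ ∈ K.faces, f '' σ ∈ L.faces) (hg : ∀ σ ∈ K.faces, g '' σ ∈ L.faces)
    (hfe : ∀ γ : Γ, ∀ v ∈ K.verts, f (a γ v) = b γ (f v))
    (hge : ∀ γ : Γ, ∀ v ∈ K.verts, g (a γ v) = b γ (g v))
    (hfg : StronglyGHomotopicMM Γ a b K L (fun v => {f v}) (fun v => {g v})) :
    StronglyGHomotopicPosetOn Γ (fun γ (σ : Set V) => (a γ) '' σ)
      (fun γ (σ : Set W) => (b γ) '' σ) (facePoset K) (facePoset L)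
      (fun σ => f '' σ) (fun σ => g '' σ) := by
  have key : ∀ η η' : V → Set W,
      (IsEquivMultiMap Γ a b K L η ∧ IsEquivMultiMap Γ a b K L η' ∧
        (mmLE K η η' ∨ mmLE K η' η)) →
      (fun h h' => IsGPosetMapOn Γ (fun γ (σ : Set V) => (a γ) '' σ)
          (fun γ (σ : Set W) => (b γ) '' σ) (facePoset K) (facePoset L) h ∧
        IsGPosetMapOn Γ (fun γ (σ : Set V) => (a γ) '' σ)
          (fun γ (σ : Set W) => (b γ) '' σ) (facePoset K) (facePoset L) h' ∧
        ((∀ x ∈ facePoset K, h x ≤ h' x) ∨ (∀ x ∈ facePoset K, h' x ≤ h x)))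
        (fun σ => ⋃ v ∈ σ, η v) (fun σ => ⋃ v ∈ σ, η' v) := by
    rintro η η' ⟨hη, hη', hle⟩
    refine ⟨fmap_isGPosetMapOn a b K L ha hη, fmap_isGPosetMapOn a b K L ha hη', ?_⟩
    rcases hle with h | h
    · left
      rintro σ ⟨hσ, -⟩
      exact Set.iUnion₂_mono fun v hv => h v (vert_of_mem_face hσ hv)
    · right
      rintro σ ⟨hσ, -⟩
      exact Set.iUnion₂_mono fun v hv => h v (vert_of_mem_face hσ hv)
  have := Relation.ReflTransGen.lift
    (p := fun h h' => IsGPosetMapOn Γ (fun γ (σ : Set V) => (a γ) '' σ)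
          (fun γ (σ : Set W) => (b γ) '' σ) (facePoset K) (facePoset L) h ∧
        IsGPosetMapOn Γ (fun γ (σ : Set V) => (a γ) '' σ)
          (fun γ (σ : Set W) => (b γ) '' σ) (facePoset K) (facePoset L) h' ∧
        ((∀ x ∈ facePoset K, h x ≤ h' x) ∨ (∀ x ∈ facePoset K, h' x ≤ h x)))
    (fun η : V → Set W => fun σ : Set V => ⋃ v ∈ σ, η v) key _ _ hfg
  unfold StronglyGHomotopicPosetOn
  simpa only [Function.onFun, fmap_singleton f, fmap_singleton g] using this
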